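/- Let Eₙ and Fₙ, n ∈ ℕ, be a sequence of pairs of continua in ℂ. If the sequence Δ(Eₙ,Fₙ) is bounded away from 0, i.e. there exists c > 0 with Δ(Eₙ,Fₙ) ≥ c for all n, then the sequence of moduli is bounded: there exists M < ∞ with mod(Eₙ,Fₙ;ℂ) ≤ M for all n. -/

import Mathlib

open MeasureTheory Set

set_option maxHeartbeats 4000000

noncomputable section

/-- A continuous, piecewise continuously differentiable curve parametrized by `[0,1]`. -/
structure PCurve where
  toFun : ℝ → ℂ
  continuousOn : ContinuousOn toFun (Set.Icc 0 1)
  exceptional : Finset ℝ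
  differentiableAt : ∀ t ∈ Set.Icc (0:ℝ) 1 \ (exceptional : Set ℝ), DifferentiableAt ℝ toFun t
  derivContinuousOn : ContinuousOn (deriv toFun) (Set.Icc (0:ℝ) 1 \ (exceptional : Set ℝ))

/-- The line integral `∫_γ ρ |dz|` of a nonnegative Borel function along a curve. -/
def curveLIntegral (ρ : ℂ → ENNReal) (γ : PCurve) : ENNReal :=
  ∫⁻ t in Set.Ioo (0:ℝ) 1, ρ (γ.toFun t) * ENNReal.ofReal ‖deriv γ.toFun t‖

/-- `ρ` is admissible for the curve family `Γ`. -/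
def IsAdmissible (ρ : ℂ → ENNReal) (Γ : Set PCurve) : Prop :=
  Measurable ρ ∧ ∀ γ ∈ Γ, 1 ≤ curveLIntegral ρ γ

/-- The conformal modulus of a family of curves. -/
def modulus (Γ : Set PCurve) : ENNReal :=
  ⨅ (ρ : ℂ → ENNReal) (_ : IsAdmissible ρ Γ), ∫⁻ z : ℂ, ρ z ^ 2

/-- The family `(E, F; Ω)` of curves with interior in `Ω`, one endpoint in `E` and
the other endpoint in `F`. -/
def connecting (E F Ω : Set ℂ) : Set PCurve :=
  {γ | (∀ t ∈ Set.Ioo (0:ℝ) 1, γ.toFun t ∈ Ω) ∧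
    ((γ.toFun 0 ∈ E ∧ γ.toFun 1 ∈ F) ∨ (γ.toFun 0 ∈ F ∧ γ.toFun 1 ∈ E))}

/-- A continuum: a compact connected set with more than one point. -/
def IsContinuum (E : Set ℂ) : Prop :=
  IsCompact E ∧ IsConnected E ∧ E.Nontrivial

/-- The distance between two sets. -/
def setDist (E F : Set ℂ) : ℝ :=
  sInf (Set.image2 dist E F)

/-- The relative distance `Δ(E,F) = dist(E,F) / min(diam E, diam F)`. -/
def relDist (E F : Set ℂ) : ℝ :=
  setDist E F / min (Metric.diam E) (Metric.diam F)

/-! ### Auxiliary lemmas -/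

/-- FTC-type inequality: the distance between two points of a piecewise `C¹` curve is bounded
by the (lower Lebesgue) integral of the norm of its derivative. -/
lemma ftc_ineq (γ : PCurve) {a b : ℝ} (ha : a ∈ Set.Icc (0:ℝ) 1) (hb : b ∈ Set.Icc (0:ℝ) 1)
    (hab : a ≤ b) :
    ENNReal.ofReal (dist (γ.toFun b) (γ.toFun a)) ≤
      ∫⁻ t in Set.Ioo a b, ENNReal.ofReal ‖deriv γ.toFun t‖ := by
  by_cases hfin : (∫⁻ t in Set.Ioo a b, ENNReal.ofReal ‖deriv γ.toFun t‖) = ⊤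
  · exact hfin ▸ le_top
  have hmeas : Measurable (deriv γ.toFun) := measurable_deriv _
  have hsub : Set.Icc a b ⊆ Set.Icc (0:ℝ) 1 := Set.Icc_subset_Icc ha.1 hb.2
  have hint : IntegrableOn (deriv γ.toFun) (Set.Ioo a b) := by
    refine ⟨hmeas.aestronglyMeasurable.restrict, ?_⟩
    rw [HasFiniteIntegral]
    simpa only [← ofReal_norm] using lt_top_iff_ne_top.2 hfin
  have hintIoc : IntegrableOn (deriv γ.toFun) (Set.Ioc a b) :=
    hint.congr_set_ae Ioo_ae_eq_Ioc.symm
  have hii : IntervalIntegrable (deriv γ.toFun) volume a b :=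
    (intervalIntegrable_iff_integrableOn_Ioc_of_le hab).2 hintIoc
  have hftc : ∫ t in a..b, deriv γ.toFun t = γ.toFun b - γ.toFun a := by
    refine integral_eq_of_hasDerivAt_off_countable γ.toFun (deriv γ.toFun)
      (γ.exceptional.countable_toSet) ?_ ?_ hii
    · refine γ.continuousOn.mono ?_
      rw [Set.uIcc_of_le hab]; exact hsub
    · intro x hx
      rw [min_eq_left hab, max_eq_right hab] at hx
      exact (γ.differentiableAt x ⟨hsub (Set.Ioo_subset_Icc_self hx.1), hx.2⟩).hasDerivAt
  have h1 : dist (γ.toFun b) (γ.toFun a) ≤ ∫ t in a..b, ‖deriv γ.toFun t‖ := by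
    rw [dist_eq_norm, ← hftc]
    exact intervalIntegral.norm_integral_le_integral_norm hab
  have h2 : ENNReal.ofReal (∫ t in a..b, ‖deriv γ.toFun t‖) =
      ∫⁻ t in Set.Ioo a b, ENNReal.ofReal ‖deriv γ.toFun t‖ := by
    rw [intervalIntegral.integral_of_le hab,
      ofReal_integral_eq_lintegral_ofReal hintIoc.norm
        (Filter.Eventually.of_forall fun t => norm_nonneg _),
      setLIntegral_congr (Ioo_ae_eq_Ioc (a := a) (b := b))]
  calc ENNReal.ofReal (dist (γ.toFun b) (γ.toFun a))
      ≤ ENNReal.ofReal (∫ t in a..b, ‖deriv γ.toFun t‖) := ENNReal.ofReal_le_ofReal h1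
    _ = _ := h2

/-- If a subarc of the curve stays inside `B` and its endpoints are at distance `≥ d`,
then the line integral of `(1/d)·𝟙_B` along the curve is at least `1`. -/
lemma piece_bound (γ : PCurve) (B : Set ℂ) {d : ℝ} (hd : 0 < d) {u v : ℝ}
    (hu : u ∈ Set.Icc (0:ℝ) 1) (hv : v ∈ Set.Icc (0:ℝ) 1) (huv : u ≤ v)
    (hmem : ∀ t ∈ Set.Ioo u v, γ.toFun t ∈ B)
    (hdist : d ≤ dist (γ.toFun v) (γ.toFun u)) :
    1 ≤ curveLIntegral (B.indicator fun _ => ENNReal.ofReal (1/d)) γ := by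
  have hms : Measurable fun t => ENNReal.ofReal ‖deriv γ.toFun t‖ :=
    (measurable_deriv _).norm.ennreal_ofReal
  have key : ∫⁻ t in Set.Ioo u v,
      (B.indicator fun _ => ENNReal.ofReal (1/d)) (γ.toFun t) * ENNReal.ofReal ‖deriv γ.toFun t‖
      = ∫⁻ t in Set.Ioo u v, ENNReal.ofReal (1/d) * ENNReal.ofReal ‖deriv γ.toFun t‖ := by
    refine setLIntegral_congr_fun measurableSet_Ioo ?_
    intro t ht
    beta_reduce
    rw [Set.indicator_of_mem (hmem t ht)]
  have hsub : Set.Ioo u v ⊆ Set.Ioo (0:ℝ) 1 := Set.Ioo_subset_Ioo hu.1 hv.2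
  calc (1 : ENNReal) = ENNReal.ofReal (1/d) * ENNReal.ofReal d := by
        rw [← ENNReal.ofReal_mul (by positivity), one_div, inv_mul_cancel₀ hd.ne']
        simp
    _ ≤ ENNReal.ofReal (1/d) * ENNReal.ofReal (dist (γ.toFun v) (γ.toFun u)) :=
        mul_le_mul_right (ENNReal.ofReal_le_ofReal hdist) _
    _ ≤ ENNReal.ofReal (1/d) * ∫⁻ t in Set.Ioo u v, ENNReal.ofReal ‖deriv γ.toFun t‖ :=
        mul_le_mul_right (ftc_ineq γ hu hv huv) _
    _ = ∫⁻ t in Set.Ioo u v, ENNReal.ofReal (1/d) * ENNReal.ofReal ‖deriv γ.toFun t‖ :=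
        (lintegral_const_mul _ hms).symm
    _ = ∫⁻ t in Set.Ioo u v,
        (B.indicator fun _ => ENNReal.ofReal (1/d)) (γ.toFun t) *
          ENNReal.ofReal ‖deriv γ.toFun t‖ := key.symm
    _ ≤ curveLIntegral (B.indicator fun _ => ENNReal.ofReal (1/d)) γ :=
        lintegral_mono_set hsub

/-- First-hitting-time lemma (from the left). -/
lemma exit_left {g : ℝ → ℝ} {a t0 R : ℝ} (hg : ContinuousOn g (Set.Icc a t0)) (hA : a ≤ t0)
    (hga : g a < R) (hgt0 : R < g t0) :
    ∃ T ∈ Set.Icc a t0, g T = R ∧ ∀ t ∈ Set.Ico a T, g t < R := by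
  set S : Set ℝ := Set.Icc a t0 ∩ g ⁻¹' {R} with hS
  have hSne : S.Nonempty := by
    have := intermediate_value_Icc hA hg
    obtain ⟨T, hT, hTR⟩ := this ⟨hga.le, hgt0.le⟩
    exact ⟨T, hT, hTR⟩
  have hScl : IsClosed S := by
    have := hg.preimage_isClosed_of_isClosed isClosed_Icc (isClosed_singleton (x := R))
    simpa [hS, Set.inter_comm] using this
  have hSbdd : BddBelow S := ⟨a, fun t ht => ht.1.1⟩
  refine ⟨sInf S, (hScl.csInf_mem hSne hSbdd).1, (hScl.csInf_mem hSne hSbdd).2, ?_⟩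
  intro t ht
  by_contra hlt
  push_neg at hlt
  rcases eq_or_lt_of_le hlt with heq | hgt
  · exact absurd (csInf_le hSbdd ⟨⟨ht.1, ((hScl.csInf_mem hSne hSbdd).1.2.trans' ht.2.le)⟩, heq.symm⟩)
      (not_le.2 ht.2)
  · have htt0 : t ≤ t0 := ((hScl.csInf_mem hSne hSbdd).1.2.trans' ht.2.le)
    have hsub : Set.Icc a t ⊆ Set.Icc a t0 := Set.Icc_subset_Icc le_rfl htt0
    obtain ⟨s, hs, hsR⟩ := intermediate_value_Icc ht.1 (hg.mono hsub) ⟨hga.le, hgt.le⟩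
    exact absurd (csInf_le hSbdd ⟨hsub hs, hsR⟩) (not_le.2 (hs.2.trans_lt ht.2))

/-- First-hitting-time lemma (from the right). -/
lemma exit_right {g : ℝ → ℝ} {a t0 R : ℝ} (hg : ContinuousOn g (Set.Icc t0 a)) (hA : t0 ≤ a)
    (hga : g a < R) (hgt0 : R < g t0) :
    ∃ T ∈ Set.Icc t0 a, g T = R ∧ ∀ t ∈ Set.Ioc T a, g t < R := by
  set S : Set ℝ := Set.Icc t0 a ∩ g ⁻¹' {R} with hS
  have hSne : S.Nonempty := by
    obtain ⟨T, hT, hTR⟩ := intermediate_value_Icc' hA hg ⟨hga.le, hgt0.le⟩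
    exact ⟨T, hT, hTR⟩
  have hScl : IsClosed S := by
    have := hg.preimage_isClosed_of_isClosed isClosed_Icc (isClosed_singleton (x := R))
    simpa [hS, Set.inter_comm] using this
  have hSbdd : BddAbove S := ⟨a, fun t ht => ht.1.2⟩
  refine ⟨sSup S, (hScl.csSup_mem hSne hSbdd).1, (hScl.csSup_mem hSne hSbdd).2, ?_⟩
  intro t ht
  by_contra hlt
  push_neg at hlt
  rcases eq_or_lt_of_le hlt with heq | hgt
  · exact absurd (le_csSup hSbdd ⟨⟨((hScl.csSup_mem hSne hSbdd).1.1.trans ht.1.le), ht.2⟩, heq.symm⟩)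
      (not_le.2 ht.1)
  · have ht0t : t0 ≤ t := ((hScl.csSup_mem hSne hSbdd).1.1.trans ht.1.le)
    have hsub : Set.Icc t a ⊆ Set.Icc t0 a := Set.Icc_subset_Icc ht0t le_rfl
    obtain ⟨s, hs, hsR⟩ := intermediate_value_Icc' ht.2 (hg.mono hsub) ⟨hga.le, hgt.le⟩
    exact absurd (le_csSup hSbdd ⟨hsub hs, hsR⟩) (not_le.2 (ht.1.trans_le hs.1))

/-- The indicator of a ball around a point of the "small" set, scaled by `1/d`, is admissible. -/
lemma admissible_aux (x : ℂ) {δ d : ℝ} (hδ : 0 ≤ δ) (hd : 0 < d)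
    (γ : PCurve) {a b : ℝ}
    (hab : (a = 0 ∧ b = 1) ∨ (a = 1 ∧ b = 0))
    (hax : dist (γ.toFun a) x ≤ δ)
    (hdab : d ≤ dist (γ.toFun a) (γ.toFun b)) :
    1 ≤ curveLIntegral
      ((Metric.closedBall x (δ + d)).indicator fun _ => ENNReal.ofReal (1/d)) γ := by
  set B := Metric.closedBall x (δ + d) with hB
  set g : ℝ → ℝ := fun t => dist (γ.toFun t) x with hg
  have hgc : ContinuousOn g (Set.Icc 0 1) := fun t ht =>
    (γ.continuousOn t ht).dist continuousWithinAt_const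
  have ha01 : a ∈ Set.Icc (0:ℝ) 1 := by
    rcases hab with ⟨h, _⟩ | ⟨h, _⟩ <;> simp [h]
  have hb01 : b ∈ Set.Icc (0:ℝ) 1 := by
    rcases hab with ⟨_, h⟩ | ⟨_, h⟩ <;> simp [h]
  by_cases hin : ∀ t ∈ Set.Icc (0:ℝ) 1, g t ≤ δ + d
  · -- the whole curve stays in the ball
    refine piece_bound γ B hd (Set.left_mem_Icc.2 zero_le_one)
      (Set.right_mem_Icc.2 zero_le_one) zero_le_one
      (fun t ht => Metric.mem_closedBall.2 (hin t (Set.Ioo_subset_Icc_self ht))) ?_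
    rcases hab with ⟨h0, h1⟩ | ⟨h0, h1⟩
    · rw [dist_comm]; rw [h0, h1] at hdab; exact hdab
    · rw [h0, h1] at hdab; exact hdab
  · push_neg at hin
    obtain ⟨t0, ht0, hgt0⟩ := hin
    have hgaR : g a < δ + d := lt_of_le_of_lt hax (by linarith)
    rcases hab with ⟨h0, _⟩ | ⟨h0, _⟩
    · -- a = 0 : travel from a towards t0
      have hA : a ≤ t0 := h0 ▸ ht0.1
      obtain ⟨T, hT, hTR, hTlt⟩ :=
        exit_left (hgc.mono (Set.Icc_subset_Icc (h0 ▸ le_rfl) ht0.2)) hA hgaR hgt0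
      have hT01 : T ∈ Set.Icc (0:ℝ) 1 := ⟨h0 ▸ hT.1, hT.2.trans ht0.2⟩
      refine piece_bound γ B hd ha01 hT01 hT.1 ?_ ?_
      · intro t ht
        exact Metric.mem_closedBall.2 (hTlt t (Set.Ioo_subset_Ico_self ht)).le
      · have h1 := abs_dist_sub_le (γ.toFun T) (γ.toFun a) x
        have h2 : g T - g a ≤ dist (γ.toFun T) (γ.toFun a) :=
          (le_abs_self _).trans h1
        rw [hTR] at h2
        simp only [hg] at h2
        linarith [hax]
    · -- a = 1 : travel from t0 towards a
      have hA : t0 ≤ a := h0 ▸ ht0.2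
      obtain ⟨T, hT, hTR, hTlt⟩ :=
        exit_right (hgc.mono (Set.Icc_subset_Icc ht0.1 (h0 ▸ le_rfl))) hA hgaR hgt0
      have hT01 : T ∈ Set.Icc (0:ℝ) 1 := ⟨ht0.1.trans hT.1, h0 ▸ hT.2⟩
      refine piece_bound γ B hd hT01 ha01 hT.2 ?_ ?_
      · intro t ht
        exact Metric.mem_closedBall.2 (hTlt t (Set.Ioo_subset_Ioc_self ht)).le
      · have h1 := abs_dist_sub_le (γ.toFun T) (γ.toFun a) x
        have h2 : g T - g a ≤ dist (γ.toFun T) (γ.toFun a) :=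
          (le_abs_self _).trans h1
        rw [hTR] at h2
        simp only [hg] at h2
        rw [dist_comm]
        linarith [hax]

/-- Corollary: if `Δ(Eₙ,Fₙ)` is bounded away from `0`, then `mod(Eₙ,Fₙ;ℂ)` is bounded. -/
theorem modulus_bounded_of_relDist_bounded_below (E F : ℕ → Set ℂ)
    (hE : ∀ n, IsContinuum (E n)) (hF : ∀ n, IsContinuum (F n))
    (c : ℝ) (hc : 0 < c) (hrel : ∀ n, c ≤ relDist (E n) (F n)) :
    ∃ M : ℝ, ∀ n, modulus (connecting (E n) (F n) Set.univ) ≤ ENNReal.ofReal M := by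
  refine ⟨(1/c + 1)^2 * 4, fun n => ?_⟩
  obtain ⟨hEc, hEconn, hEnt⟩ := hE n
  obtain ⟨hFc, hFconn, hFnt⟩ := hF n
  have hEb : Bornology.IsBounded (E n) := hEc.isBounded
  have hFb : Bornology.IsBounded (F n) := hFc.isBounded
  -- diameters are positive
  have hdiam : ∀ (G : Set ℂ), G.Nontrivial → Bornology.IsBounded G → 0 < Metric.diam G := by
    intro G hnt hbd
    obtain ⟨p, hp, q, hq, hpq⟩ := hnt
    exact lt_of_lt_of_le (dist_pos.2 hpq) (Metric.dist_le_diam_of_mem hbd hp hq)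
  set δ : ℝ := min (Metric.diam (E n)) (Metric.diam (F n)) with hδdef
  have hδ : 0 < δ := lt_min (hdiam _ hEnt hEb) (hdiam _ hFnt hFb)
  set d : ℝ := setDist (E n) (F n) with hddef
  have hcδ : c * δ ≤ d := by
    have h := hrel n
    rw [relDist, ← hδdef, ← hddef] at h
    calc c * δ ≤ (d / δ) * δ := mul_le_mul_of_nonneg_right h hδ.le
      _ = d := div_mul_cancel₀ _ hδ.ne'
  have hd : 0 < d := (mul_pos hc hδ).trans_le hcδ
  -- lower bound for distances between points of E and F
  have hbddBelow : BddBelow (Set.image2 dist (E n) (F n)) :=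
    ⟨0, fun r ⟨p, hp, q, hq, hr⟩ => hr ▸ dist_nonneg⟩
  have hdle : ∀ p ∈ E n, ∀ q ∈ F n, d ≤ dist p q := fun p hp q hq =>
    csInf_le hbddBelow (Set.mem_image2_of_mem hp hq)
  -- choose the base point in the set of minimal diameter
  by_cases hmin : Metric.diam (E n) ≤ Metric.diam (F n)
  case pos =>
    have hδE : δ = Metric.diam (E n) := min_eq_left hmin
    obtain ⟨x, hx⟩ := hEnt.nonempty
    set ρ : ℂ → ENNReal :=
      (Metric.closedBall x (δ + d)).indicator fun _ => ENNReal.ofReal (1/d) with hρ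
    have hadm : IsAdmissible ρ (connecting (E n) (F n) Set.univ) := by
      constructor
      · exact Measurable.indicator measurable_const measurableSet_closedBall
      · rintro γ ⟨-, hends⟩
        rcases hends with ⟨h0, h1⟩ | ⟨h0, h1⟩
        · exact admissible_aux x hδ.le hd γ (Or.inl ⟨rfl, rfl⟩)
            (hδE ▸ Metric.dist_le_diam_of_mem hEb h0 hx) (hdle _ h0 _ h1)
        · exact admissible_aux x hδ.le hd γ (Or.inr ⟨rfl, rfl⟩)
            (hδE ▸ Metric.dist_le_diam_of_mem hEb h1 hx) (hdle _ h1 _ h0)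
    calc modulus (connecting (E n) (F n) Set.univ) ≤ ∫⁻ z : ℂ, ρ z ^ 2 :=
          iInf_le_of_le ρ (iInf_le_of_le hadm le_rfl)
      _ ≤ ENNReal.ofReal ((1/c + 1)^2 * 4) := by
          rw [hρ]
          have : ∀ z : ℂ, ((Metric.closedBall x (δ + d)).indicator
              (fun _ => ENNReal.ofReal (1/d)) z) ^ 2 =
              (Metric.closedBall x (δ + d)).indicator
                (fun _ => ENNReal.ofReal (1/d) ^ 2) z := by
            intro z
            by_cases hz : z ∈ Metric.closedBall x (δ + d) <;>
              simp [Set.indicator_apply, hz]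
          simp_rw [this]
          rw [lintegral_indicator measurableSet_closedBall, setLIntegral_const,
            Complex.volume_closedBall]
          calc ENNReal.ofReal (1/d) ^ 2 * (ENNReal.ofReal (δ + d) ^ 2 * NNReal.pi)
              = (ENNReal.ofReal (1/d) * ENNReal.ofReal (δ + d)) ^ 2 * NNReal.pi := by
                ring
            _ = ENNReal.ofReal ((δ + d)/d) ^ 2 * NNReal.pi := by
                rw [← ENNReal.ofReal_mul (by positivity), one_div, inv_mul_eq_div]
            _ ≤ ENNReal.ofReal (1/c + 1) ^ 2 * ENNReal.ofReal 4 := by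
                refine mul_le_mul ?_ ?_ (zero_le) (zero_le)
                · refine pow_le_pow_left₀ (zero_le) (ENNReal.ofReal_le_ofReal ?_) 2
                  rw [add_div, div_self hd.ne']
                  have hδd : δ / d ≤ 1 / c := by
                    rw [div_le_div_iff₀ hd hc]
                    linarith [hcδ]
                  linarith
                · rw [← ENNReal.ofReal_coe_nnreal, NNReal.coe_real_pi]
                  exact ENNReal.ofReal_le_ofReal (by linarith [Real.pi_le_four])
            _ = ENNReal.ofReal ((1/c + 1)^2 * 4) := by
                rw [← ENNReal.ofReal_pow (by positivity), ← ENNReal.ofReal_mul (by positivity)]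
  case neg =>
    push_neg at hmin
    have hδF : δ = Metric.diam (F n) := min_eq_right hmin.le
    obtain ⟨x, hx⟩ := hFnt.nonempty
    set ρ : ℂ → ENNReal :=
      (Metric.closedBall x (δ + d)).indicator fun _ => ENNReal.ofReal (1/d) with hρ
    have hadm : IsAdmissible ρ (connecting (E n) (F n) Set.univ) := by
      constructor
      · exact Measurable.indicator measurable_const measurableSet_closedBall
      · rintro γ ⟨-, hends⟩
        rcases hends with ⟨h0, h1⟩ | ⟨h0, h1⟩
        · exact admissible_aux x hδ.le hd γ (Or.inr ⟨rfl, rfl⟩)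
            (hδF ▸ Metric.dist_le_diam_of_mem hFb h1 hx)
            (by rw [dist_comm]; exact hdle _ h0 _ h1)
        · exact admissible_aux x hδ.le hd γ (Or.inl ⟨rfl, rfl⟩)
            (hδF ▸ Metric.dist_le_diam_of_mem hFb h0 hx)
            (by rw [dist_comm]; exact hdle _ h1 _ h0)
    calc modulus (connecting (E n) (F n) Set.univ) ≤ ∫⁻ z : ℂ, ρ z ^ 2 :=
          iInf_le_of_le ρ (iInf_le_of_le hadm le_rfl)
      _ ≤ ENNReal.ofReal ((1/c + 1)^2 * 4) := by
          rw [hρ]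
          have : ∀ z : ℂ, ((Metric.closedBall x (δ + d)).indicator
              (fun _ => ENNReal.ofReal (1/d)) z) ^ 2 =
              (Metric.closedBall x (δ + d)).indicator
                (fun _ => ENNReal.ofReal (1/d) ^ 2) z := by
            intro z
            by_cases hz : z ∈ Metric.closedBall x (δ + d) <;>
              simp [Set.indicator_apply, hz]
          simp_rw [this]
          rw [lintegral_indicator measurableSet_closedBall, setLIntegral_const,
            Complex.volume_closedBall]
          calc ENNReal.ofReal (1/d) ^ 2 * (ENNReal.ofReal (δ + d) ^ 2 * NNReal.pi)
              = (ENNReal.ofReal (1/d) * ENNReal.ofReal (δ + d)) ^ 2 * NNReal.pi := by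
                ring
            _ = ENNReal.ofReal ((δ + d)/d) ^ 2 * NNReal.pi := by
                rw [← ENNReal.ofReal_mul (by positivity), one_div, inv_mul_eq_div]
            _ ≤ ENNReal.ofReal (1/c + 1) ^ 2 * ENNReal.ofReal 4 := by
                refine mul_le_mul ?_ ?_ (zero_le) (zero_le)
                · refine pow_le_pow_left₀ (zero_le) (ENNReal.ofReal_le_ofReal ?_) 2
                  rw [add_div, div_self hd.ne']
                  have hδd : δ / d ≤ 1 / c := by
                    rw [div_le_div_iff₀ hd hc]
                    linarith [hcδ]
                  linarith
                · rw [← ENNReal.ofReal_coe_nnreal, NNReal.coe_real_pi]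
                  exact ENNReal.ofReal_le_ofReal (by linarith [Real.pi_le_four])
            _ = ENNReal.ofReal ((1/c + 1)^2 * 4) := by
                rw [← ENNReal.ofReal_pow (by positivity), ← ENNReal.ofReal_mul (by positivity)]

end
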